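/- For the modified stick-breaking process with parameters $\tilde\nu \in (0,1]$ and $\theta^* > 0$, and for all positive integers $n_1, n_2$: $\mathbb{E}\left[X_1^{n_1} X_2^{n_2} (1 - \tilde\nu X_1)\right] = \frac{\theta^*\, \tilde\nu^2\, n_1!\, n_2!\, \Gamma(\theta^* + 1)}{\Gamma(\theta^* + n_1 + n_2 + 2)}$. -/

import Mathlib

open MeasureTheory ProbabilityTheory
open scoped BigOperators ENNReal

/-- `sbEta ν U B n` is the remaining-stick variable `η_n` of the modified stick-breaking
process: `η_0 = 1`, `η_n = η_{n-1}(1 - D_n)` with `D_n = ξ_n B_n` and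
`ξ_n = 1{U_n ≤ ν η_{n-1}/(1-ν+ν η_{n-1})}` (here `U (n-1), B (n-1)` play the role of
the paper's `U_n, B_n`). -/
noncomputable def sbEta (ν : ℝ) {Ω : Type*} (U B : ℕ → Ω → ℝ) : ℕ → Ω → ℝ
  | 0 => fun _ => 1
  | n + 1 => fun ω =>
      sbEta ν U B n ω *
        (1 - if U n ω ≤ ν * sbEta ν U B n ω / (1 - ν + ν * sbEta ν U B n ω)
             then B n ω else 0)

/-- `sbX ν U B n = X_{n+1} = η_n D_{n+1}` of the modified stick-breaking process. -/
noncomputable def sbX (ν : ℝ) {Ω : Type*} (U B : ℕ → Ω → ℝ) (n : ℕ) (ω : Ω) : ℝ :=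
  sbEta ν U B n ω *
    (if U n ω ≤ ν * sbEta ν U B n ω / (1 - ν + ν * sbEta ν U B n ω)
     then B n ω else 0)

namespace SBAux

open Set
open scoped NNReal

lemma real_beta {a b : ℝ} (ha : 0 < a) (hb : 0 < b) :
    ∫ x in (0:ℝ)..1, x ^ (a-1) * (1-x) ^ (b-1)
      = Real.Gamma a * Real.Gamma b / Real.Gamma (a+b) := by
  have hg := Complex.Gamma_mul_Gamma_eq_betaIntegral
    (s := (a:ℂ)) (t := (b:ℂ)) (by simpa using ha) (by simpa using hb)
  have hbeta : Complex.betaIntegral a b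
      = ((∫ x in (0:ℝ)..1, x ^ (a-1) * (1-x) ^ (b-1) : ℝ) : ℂ) := by
    rw [Complex.betaIntegral, ← intervalIntegral.integral_ofReal]
    refine intervalIntegral.integral_congr fun x hx => ?_
    rw [Set.uIcc_of_le (by norm_num : (0:ℝ) ≤ 1)] at hx
    rw [Complex.ofReal_mul, Complex.ofReal_cpow hx.1,
      Complex.ofReal_cpow (by linarith [hx.2] : (0:ℝ) ≤ 1 - x)]
    push_cast
    ring
  rw [hbeta, ← Complex.ofReal_add, Complex.Gamma_ofReal, Complex.Gamma_ofReal,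
    Complex.Gamma_ofReal, ← Complex.ofReal_mul, ← Complex.ofReal_mul] at hg
  have hg' := Complex.ofReal_inj.mp hg
  have hne : Real.Gamma (a+b) ≠ 0 := (Real.Gamma_pos_of_pos (by linarith)).ne'
  rw [eq_div_iff hne]
  linear_combination -hg'

lemma cdf_int {θ : ℝ} (hθ : 0 < θ) (x : ℝ) :
    ∫ t in (0:ℝ)..x, θ * (1-t) ^ (θ-1) = 1 - (1-x) ^ θ := by
  rw [intervalIntegral.integral_const_mul,
    intervalIntegral.integral_comp_sub_left (fun s : ℝ => s ^ (θ-1)) 1,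
    integral_rpow (Or.inl (by linarith)), sub_zero]
  rw [show θ - 1 + 1 = θ by ring, Real.one_rpow]
  field_simp

/-- the Beta(1,θ) density as an `ℝ≥0`-valued function. -/
noncomputable def dens (θ : ℝ) : ℝ → ℝ≥0 := fun t =>
  (Set.Ioc (0:ℝ) 1).indicator (fun t => Real.toNNReal (θ * (1-t) ^ (θ-1))) t

lemma dens_meas (θ : ℝ) : Measurable (dens θ) := by
  apply Measurable.indicator _ measurableSet_Ioc
  exact ((((measurable_const.sub measurable_id).pow measurable_const)).const_mul θ).real_toNNReal

lemma dens_intervalIntegrable {θ : ℝ} (hθ : 0 < θ) (y : ℝ) :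
    IntervalIntegrable (fun t => θ * (1-t) ^ (θ-1)) volume 0 y := by
  have h1 : IntervalIntegrable (fun s : ℝ => s ^ (θ-1)) volume (1-y) (1-0) :=
    intervalIntegral.intervalIntegrable_rpow' (by linarith)
  have h2 := (h1.comp_sub_left 1).const_mul θ
  have h3 := h2.symm
  simpa using h3

lemma key_lintegral {θ : ℝ} (hθ : 0 < θ) {y : ℝ} (hy : y ≤ 1) :
    ∫⁻ t in Set.Ioc (0:ℝ) y, ENNReal.ofReal (θ * (1-t) ^ (θ-1))
      = ENNReal.ofReal (1 - (1-y) ^ θ) := by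
  rcases le_or_gt y 0 with hy0 | hy0
  · rw [Set.Ioc_eq_empty (by exact fun h => absurd hy0 (not_le.mpr h)), Measure.restrict_empty,
      lintegral_zero_measure]
    symm
    rw [ENNReal.ofReal_eq_zero]
    have h1 : (1:ℝ) ≤ (1-y) ^ θ := by
      calc (1:ℝ) = 1 ^ θ := (Real.one_rpow θ).symm
        _ ≤ (1-y) ^ θ :=
          Real.rpow_le_rpow (by norm_num) (by linarith) hθ.le
    linarith
  · have hint : IntegrableOn (fun t => θ * (1-t) ^ (θ-1)) (Set.Ioc (0:ℝ) y) volume := by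
      have := dens_intervalIntegrable hθ y
      rwa [intervalIntegrable_iff_integrableOn_Ioc_of_le hy0.le] at this
    have hnn : 0 ≤ᵐ[volume.restrict (Set.Ioc (0:ℝ) y)] fun t => θ * (1-t) ^ (θ-1) := by
      filter_upwards [ae_restrict_mem measurableSet_Ioc] with t ht
      exact mul_nonneg hθ.le (Real.rpow_nonneg (by linarith [ht.2]) _)
    rw [← ofReal_integral_eq_lintegral_ofReal hint hnn,
      ← intervalIntegral.integral_of_le hy0.le, cdf_int hθ]

lemma coe_dens (θ : ℝ) : (fun t => (dens θ t : ℝ≥0∞))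
    = (Set.Ioc (0:ℝ) 1).indicator (fun t => ENNReal.ofReal (θ * (1-t) ^ (θ-1))) := by
  funext t
  by_cases h : t ∈ Set.Ioc (0:ℝ) 1 <;>
    simp [dens, Set.indicator_of_mem, Set.indicator_of_notMem, h, ENNReal.ofReal]

lemma law_eq {Ω : Type*} [MeasurableSpace Ω] (μ : Measure Ω) [IsProbabilityMeasure μ]
    {θ : ℝ} (hθ : 0 < θ) {X : Ω → ℝ} (hX : Measurable X)
    (hXr : ∀ ω, X ω ∈ Set.Icc (0:ℝ) 1)
    (hXd : ∀ x ∈ Set.Icc (0:ℝ) 1, μ {ω | X ω ≤ x} = ENNReal.ofReal (1-(1-x)^θ)) :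
    μ.map X = volume.withDensity (fun t => (dens θ t : ℝ≥0∞)) := by
  have hmap : IsProbabilityMeasure (μ.map X) := Measure.isProbabilityMeasure_map hX.aemeasurable
  refine Measure.ext_of_Iic (μ.map X) _ (fun a => ?_)
  rw [Measure.map_apply hX measurableSet_Iic, withDensity_apply _ measurableSet_Iic]
  have hrw : ∫⁻ t in Set.Iic a, (dens θ t : ℝ≥0∞) ∂volume
      = ∫⁻ t in Set.Ioc (0:ℝ) (min 1 a), ENNReal.ofReal (θ * (1-t) ^ (θ-1)) ∂volume := by
    calc ∫⁻ t in Set.Iic a, (dens θ t : ℝ≥0∞) ∂volume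
        = ∫⁻ t in Set.Iic a,
            (Set.Ioc (0:ℝ) 1).indicator (fun t => ENNReal.ofReal (θ * (1-t) ^ (θ-1))) t
              ∂volume := lintegral_congr fun t => congrFun (coe_dens θ) t
      _ = ∫⁻ t in Set.Ioc (0:ℝ) 1, ENNReal.ofReal (θ * (1-t) ^ (θ-1))
              ∂(volume.restrict (Set.Iic a)) :=
            lintegral_indicator measurableSet_Ioc _
      _ = ∫⁻ t in Set.Ioc (0:ℝ) (min 1 a), ENNReal.ofReal (θ * (1-t) ^ (θ-1)) ∂volume := by
            rw [Measure.restrict_restrict measurableSet_Ioc, Set.Ioc_inter_Iic]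
  rw [hrw]
  have hpre : X ⁻¹' Set.Iic a = {ω | X ω ≤ a} := rfl
  rcases le_or_gt a 1 with h1 | h1
  · rw [min_eq_right h1, key_lintegral hθ h1, hpre]
    rcases le_or_gt 0 a with h0 | h0
    · exact hXd a ⟨h0, h1⟩
    · have : {ω | X ω ≤ a} = (∅ : Set Ω) := by
        ext ω; simp only [Set.mem_setOf_eq, Set.mem_empty_iff_false, iff_false, not_le]
        exact lt_of_lt_of_le h0 (hXr ω).1
      rw [this, measure_empty]
      symm
      rw [ENNReal.ofReal_eq_zero]
      have h2 : (1:ℝ) ≤ (1-a) ^ θ := by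
        calc (1:ℝ) = 1 ^ θ := (Real.one_rpow θ).symm
          _ ≤ (1-a) ^ θ := Real.rpow_le_rpow (by norm_num) (by linarith) hθ.le
      linarith
  · rw [min_eq_left h1.le, key_lintegral hθ le_rfl, hpre]
    have huniv : {ω | X ω ≤ a} = (Set.univ : Set Ω) := by
      ext ω; simp only [Set.mem_setOf_eq, Set.mem_univ, iff_true]
      exact le_trans (hXr ω).2 h1.le
    rw [huniv, measure_univ, sub_self, Real.zero_rpow hθ.ne', sub_zero, ENNReal.ofReal_one]

lemma mom {Ω : Type*} [MeasurableSpace Ω] (μ : Measure Ω) [IsProbabilityMeasure μ]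
    {θ : ℝ} (hθ : 0 < θ) {X : Ω → ℝ} (hX : Measurable X)
    (hXr : ∀ ω, X ω ∈ Set.Icc (0:ℝ) 1)
    (hXd : ∀ x ∈ Set.Icc (0:ℝ) 1, μ {ω | X ω ≤ x} = ENNReal.ofReal (1-(1-x)^θ))
    (n m : ℕ) :
    ∫ x, x ^ n * (1-x) ^ m ∂(μ.map X)
      = θ * n.factorial * Real.Gamma (θ + m) / Real.Gamma (θ + n + m + 1) := by
  rw [law_eq μ hθ hX hXr hXd, integral_withDensity_eq_integral_smul (dens_meas θ)]
  have hind : (fun t => dens θ t • (t ^ n * (1-t) ^ m))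
      = (Set.Ioc (0:ℝ) 1).indicator
          (fun t => θ * (1-t) ^ (θ-1) * (t ^ n * (1-t) ^ m)) := by
    funext t
    by_cases h : t ∈ Set.Ioc (0:ℝ) 1
    · have h0 : 0 ≤ θ * (1-t) ^ (θ-1) :=
        mul_nonneg hθ.le (Real.rpow_nonneg (by linarith [h.2]) _)
      simp [dens, Set.indicator_of_mem h, NNReal.smul_def, Real.coe_toNNReal _ h0]
    · simp [dens, Set.indicator_of_notMem h]
  rw [hind, integral_indicator measurableSet_Ioc, ← intervalIntegral.integral_of_le zero_le_one]
  have hcongr : Set.EqOn (fun t => θ * (1-t) ^ (θ-1) * (t ^ n * (1-t) ^ m))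
      (fun t => θ * (t ^ (((n:ℝ)+1)-1) * (1-t) ^ ((θ+m)-1))) (Set.uIcc (0:ℝ) 1) := by
    intro t ht
    rw [Set.uIcc_of_le (by norm_num : (0:ℝ) ≤ 1)] at ht
    have hn : t ^ (((n:ℝ)+1)-1) = t ^ n := by
      rw [show ((n:ℝ)+1)-1 = (n:ℝ) by ring, Real.rpow_natCast]
    simp only
    rcases lt_or_eq_of_le ht.2 with h | h
    · rw [hn, show (θ+(m:ℝ))-1 = (θ-1)+(m:ℝ) by ring,
        Real.rpow_add (by linarith : (0:ℝ) < 1 - t), Real.rpow_natCast]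
      ring
    · rw [h]
      rcases Nat.eq_zero_or_pos m with hm | hm
      · subst hm
        simp [hn, Real.one_rpow, h]
      · have h1 : (1:ℝ) ≤ (m:ℝ) := by exact_mod_cast hm
        rw [show (1:ℝ)-1 = 0 by ring, zero_pow (by omega : m ≠ 0),
          Real.zero_rpow (ne_of_gt (by linarith : (0:ℝ) < θ + (m:ℝ) - 1)),
          Real.one_rpow]
        ring
  rw [intervalIntegral.integral_congr hcongr, intervalIntegral.integral_const_mul,
    real_beta (by positivity : (0:ℝ) < (n:ℝ)+1) (by positivity : (0:ℝ) < θ + m),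
    Real.Gamma_nat_eq_factorial,
    show ((n:ℝ)+1) + (θ+m) = θ + n + m + 1 by ring]
  ring

/-- the conditional acceptance threshold for the second stick-break. -/
noncomputable def sbThr (ν : ℝ) (b : ℝ) : ℝ := ν * (1-b) / (1 - ν + ν * (1-b))

lemma sbThr_meas (ν : ℝ) : Measurable (sbThr ν) :=
  ((measurable_const.sub measurable_id).const_mul ν).div
    (((measurable_const.sub measurable_id).const_mul ν).const_add (1-ν))

lemma sbThr_mem {ν b : ℝ} (hν0 : 0 < ν) (hν1 : ν ≤ 1) (hb : b ∈ Set.Icc (0:ℝ) 1) :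
    sbThr ν b ∈ Set.Icc (0:ℝ) 1 := by
  have hnum : 0 ≤ ν * (1-b) := mul_nonneg hν0.le (by linarith [hb.2])
  have hd0 : 0 ≤ 1 - ν + ν * (1-b) := by linarith
  simp only [sbThr]
  rcases eq_or_lt_of_le hd0 with hd | hd
  · have hnum0 : ν * (1-b) = 0 := by linarith
    rw [hnum0, zero_div]
    exact ⟨le_rfl, zero_le_one⟩
  · constructor
    · exact div_nonneg hnum hd.le
    · rw [Set.mem_Icc] at hb
      rw [div_le_one hd]
      linarith

lemma sbThr_mul {ν b : ℝ} (hν0 : 0 < ν) (hν1 : ν ≤ 1) (hb : b ∈ Set.Icc (0:ℝ) 1) :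
    sbThr ν b * (1 - ν * b) = ν * (1-b) := by
  rw [sbThr, show 1 - ν + ν * (1-b) = 1 - ν * b by ring]
  by_cases h : 1 - ν * b = 0
  · rw [h, mul_zero]
    have h2 : ν * (1-b) = ν - 1 := by linear_combination h
    have h3 : 0 ≤ ν * (1-b) := mul_nonneg hν0.le (by linarith [hb.2])
    linarith
  · exact div_mul_cancel₀ _ h

/-- the bounded measurable function applied to `(B₀, U₁)`. -/
noncomputable def sbPhi (ν : ℝ) (n₁ n₂ : ℕ) : ℝ × ℝ → ℝ := fun p =>
  (if p.1 ∈ Set.Icc (0:ℝ) 1 then 1 else 0) *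
    ((if p.2 ≤ sbThr ν p.1 then 1 else 0) * (p.1 ^ n₁ * (1-p.1) ^ n₂ * (1 - ν * p.1)))

/-- the bounded measurable function applied to `(U₀, B₁)`. -/
noncomputable def sbPsi (ν : ℝ) (n₂ : ℕ) : ℝ × ℝ → ℝ := fun p =>
  (if p.1 ≤ ν then 1 else 0) * p.2 ^ n₂

lemma sbPhi_meas (ν : ℝ) (n₁ n₂ : ℕ) : Measurable (sbPhi ν n₁ n₂) := by
  refine Measurable.mul (Measurable.ite ?_ measurable_const measurable_const)
    (Measurable.mul (Measurable.ite ?_ measurable_const measurable_const) ?_)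
  · exact measurable_fst measurableSet_Icc
  · exact measurableSet_le measurable_snd ((sbThr_meas ν).comp measurable_fst)
  · fun_prop

lemma sbPsi_meas (ν : ℝ) (n₂ : ℕ) : Measurable (sbPsi ν n₂) := by
  refine Measurable.mul (Measurable.ite ?_ measurable_const measurable_const) (by fun_prop)
  exact measurableSet_le measurable_fst measurable_const

lemma sbPhi_abs_le {ν : ℝ} (hν0 : 0 < ν) (hν1 : ν ≤ 1) (n₁ n₂ : ℕ) (p : ℝ × ℝ) :
    |sbPhi ν n₁ n₂ p| ≤ 1 := by
  by_cases h1 : p.1 ∈ Set.Icc (0:ℝ) 1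
  · have e1 : |p.1| ≤ 1 := abs_le.mpr ⟨by linarith [h1.1], h1.2⟩
    have e2 : |1 - p.1| ≤ 1 := abs_le.mpr ⟨by linarith [h1.2], by linarith [h1.1]⟩
    have e3 : |1 - ν * p.1| ≤ 1 := by
      have hp1 : 0 ≤ ν * p.1 := mul_nonneg hν0.le h1.1
      have hp2 : ν * p.1 ≤ 1 := by nlinarith [h1.2]
      exact abs_le.mpr ⟨by linarith, by linarith⟩
    have f1 : |p.1 ^ n₁| ≤ 1 := by rw [abs_pow]; exact pow_le_one₀ (abs_nonneg _) e1
    have f2 : |(1-p.1) ^ n₂| ≤ 1 := by rw [abs_pow]; exact pow_le_one₀ (abs_nonneg _) e2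
    have i1 : |if p.1 ∈ Set.Icc (0:ℝ) 1 then (1:ℝ) else 0| ≤ 1 := by split <;> simp
    have i2 : |if p.2 ≤ sbThr ν p.1 then (1:ℝ) else 0| ≤ 1 := by split <;> simp
    have expand : sbPhi ν n₁ n₂ p
        = (if p.1 ∈ Set.Icc (0:ℝ) 1 then (1:ℝ) else 0) *
            ((if p.2 ≤ sbThr ν p.1 then (1:ℝ) else 0) *
              (p.1 ^ n₁ * (1-p.1) ^ n₂ * (1 - ν * p.1))) := rfl
    calc |sbPhi ν n₁ n₂ p|
        = |if p.1 ∈ Set.Icc (0:ℝ) 1 then (1:ℝ) else 0| *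
            (|if p.2 ≤ sbThr ν p.1 then (1:ℝ) else 0| *
              (|p.1 ^ n₁| * |(1-p.1) ^ n₂| * |1 - ν * p.1|)) := by
          rw [expand, abs_mul, abs_mul, abs_mul, abs_mul]
      _ ≤ 1 * (1 * (1 * 1 * 1)) := by
          gcongr <;> first | assumption | positivity
      _ = 1 := by norm_num
  · simp [sbPhi, h1]

end SBAux

open SBAux in
/-- Joint moments of the first two stick-breaking variables:
`E[X₁^{n₁} X₂^{n₂} (1 - ν X₁)] = θ* ν² n₁! n₂! Γ(θ*+1)/Γ(θ*+n₁+n₂+2)`. -/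
theorem sb_joint_moments {Ω : Type*} [MeasurableSpace Ω] (μ : Measure Ω)
    [IsProbabilityMeasure μ]
    (ν θ : ℝ) (hν0 : 0 < ν) (hν1 : ν ≤ 1) (hθ : 0 < θ)
    (U B : ℕ → Ω → ℝ)
    (hU : ∀ n, Measurable (U n)) (hB : ∀ n, Measurable (B n))
    (hUr : ∀ n ω, U n ω ∈ Set.Icc (0 : ℝ) 1)
    (hBr : ∀ n ω, B n ω ∈ Set.Icc (0 : ℝ) 1)
    (hUd : ∀ n, ∀ x ∈ Set.Icc (0 : ℝ) 1,
      μ {ω | U n ω ≤ x} = ENNReal.ofReal x)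
    (hBd : ∀ n, ∀ x ∈ Set.Icc (0 : ℝ) 1,
      μ {ω | B n ω ≤ x} = ENNReal.ofReal (1 - (1 - x) ^ θ))
    (hindep : iIndepFun (Sum.elim U B) μ)
    (n₁ n₂ : ℕ) (hn₁ : 1 ≤ n₁) (hn₂ : 1 ≤ n₂) :
    ∫ ω, (sbX ν U B 0 ω) ^ n₁ * (sbX ν U B 1 ω) ^ n₂ * (1 - ν * sbX ν U B 0 ω) ∂μ
      = θ * ν ^ 2 * (n₁.factorial : ℝ) * (n₂.factorial : ℝ) * Real.Gamma (θ + 1) /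
          Real.Gamma (θ + n₁ + n₂ + 2) := by
  classical
  have hmeasSE : ∀ i : ℕ ⊕ ℕ, Measurable (Sum.elim U B i) := by
    intro i
    cases i with
    | inl i => exact hU i
    | inr i => exact hB i
  -- pointwise identification of the integrand
  have hpt : ∀ ω, sbX ν U B 0 ω ^ n₁ * sbX ν U B 1 ω ^ n₂ * (1 - ν * sbX ν U B 0 ω)
      = sbPhi ν n₁ n₂ (B 0 ω, U 1 ω) * sbPsi ν n₂ (U 0 ω, B 1 ω) := by
    intro ω
    have e0 : sbX ν U B 0 ω = if U 0 ω ≤ ν then B 0 ω else 0 := by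
      have h1 : ν * sbEta ν U B 0 ω / (1 - ν + ν * sbEta ν U B 0 ω) = ν := by
        simp only [sbEta]
        rw [mul_one, show 1 - ν + ν = 1 by ring, div_one]
      rw [sbX, h1]
      simp [sbEta]
    have e1 : sbEta ν U B 1 ω = 1 - sbX ν U B 0 ω := by
      simp [sbEta, sbX]
    have e2 : sbX ν U B 1 ω
        = (1 - sbX ν U B 0 ω) *
            (if U 1 ω ≤ sbThr ν (sbX ν U B 0 ω) then B 1 ω else 0) := by
      rw [sbX, e1]
      simp only [sbThr]; rfl
    rw [e2, e0]
    by_cases h0 : U 0 ω ≤ ν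
    · rw [if_pos h0]
      by_cases h1 : U 1 ω ≤ sbThr ν (B 0 ω)
      · rw [if_pos h1]
        simp only [sbPhi, sbPsi, if_pos h0, if_pos h1, if_pos (hBr 0 ω)]
        rw [mul_pow]
        ring
      · rw [if_neg h1]
        simp only [sbPhi, sbPsi, if_pos h0, if_neg h1]
        rw [mul_zero, zero_pow (by omega : n₂ ≠ 0)]
        ring
    · rw [if_neg h0]
      simp only [sbPhi, sbPsi, if_neg h0]
      rw [zero_pow (by omega : n₁ ≠ 0)]
      ring
  rw [integral_congr_ae (ae_of_all μ hpt)]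
  -- independence of the two blocks
  have hφc : Measurable fun ω => sbPhi ν n₁ n₂ (B 0 ω, U 1 ω) :=
    (sbPhi_meas ν n₁ n₂).comp ((hB 0).prodMk (hU 1))
  have hψc : Measurable fun ω => sbPsi ν n₂ (U 0 ω, B 1 ω) :=
    (sbPsi_meas ν n₂).comp ((hU 0).prodMk (hB 1))
  have hPQ : IndepFun (fun ω => (B 0 ω, U 1 ω)) (fun ω => (U 0 ω, B 1 ω)) μ := by
    have h := hindep.indepFun_prodMk_prodMk hmeasSE
      (Sum.inr 0) (Sum.inl 1) (Sum.inl 0) (Sum.inr 1)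
      (by simp) (by simp) (by simp) (by simp)
    simpa using h
  have hXY := (hPQ.comp (sbPhi_meas ν n₁ n₂) (sbPsi_meas ν n₂)).integral_fun_mul_eq_mul_integral
    hφc.aestronglyMeasurable hψc.aestronglyMeasurable
  simp only [Function.comp_def] at hXY
  rw [hXY]
  -- the ψ part
  have hU0B1 : IndepFun (U 0) (B 1) μ := by
    have h := hindep.indepFun (show (Sum.inl 0 : ℕ ⊕ ℕ) ≠ Sum.inr 1 by simp)
    simpa using h
  have hf1 : Measurable fun u : ℝ => if u ≤ ν then (1:ℝ) else 0 :=
    Measurable.ite measurableSet_Iic measurable_const measurable_const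
  have hg1 : Measurable fun b : ℝ => b ^ n₂ := by fun_prop
  have hEψ : ∫ ω, sbPsi ν n₂ (U 0 ω, B 1 ω) ∂μ
      = (∫ ω, (if U 0 ω ≤ ν then (1:ℝ) else 0) ∂μ) * ∫ ω, (B 1 ω) ^ n₂ ∂μ := by
    have h := (hU0B1.comp hf1 hg1).integral_fun_mul_eq_mul_integral
      ((hf1.comp (hU 0)).aestronglyMeasurable) ((hg1.comp (hB 1)).aestronglyMeasurable)
    simpa [Function.comp_apply, sbPsi] using h
  have hEind : ∫ ω, (if U 0 ω ≤ ν then (1:ℝ) else 0) ∂μ = ν := by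
    have h : (fun ω => if U 0 ω ≤ ν then (1:ℝ) else 0)
        = fun ω => Set.indicator {ω | U 0 ω ≤ ν} (1 : Ω → ℝ) ω := by
      funext ω
      simp [Set.indicator_apply]
    rw [h, integral_indicator_one (show MeasurableSet {ω | U 0 ω ≤ ν} from hU 0 measurableSet_Iic), measureReal_def,
      hUd 0 ν ⟨hν0.le, hν1⟩, ENNReal.toReal_ofReal hν0.le]
  have hEB1 : ∫ ω, (B 1 ω) ^ n₂ ∂μ
      = θ * n₂.factorial * Real.Gamma θ / Real.Gamma (θ + n₂ + 1) := by
    have hsm : AEStronglyMeasurable (fun x : ℝ => x ^ n₂ * (1-x) ^ 0) (μ.map (B 1)) :=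
      (by fun_prop : Measurable fun x : ℝ => x ^ n₂ * (1-x) ^ 0).aestronglyMeasurable
    calc ∫ ω, (B 1 ω) ^ n₂ ∂μ = ∫ ω, (B 1 ω) ^ n₂ * (1 - B 1 ω) ^ 0 ∂μ := by simp
      _ = ∫ x, x ^ n₂ * (1-x) ^ 0 ∂(μ.map (B 1)) :=
          (integral_map (hB 1).aemeasurable hsm).symm
      _ = θ * n₂.factorial * Real.Gamma (θ + (0:ℕ)) / Real.Gamma (θ + n₂ + (0:ℕ) + 1) :=
          mom μ hθ (hB 1) (hBr 1) (hBd 1) n₂ 0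
      _ = θ * n₂.factorial * Real.Gamma θ / Real.Gamma (θ + n₂ + 1) := by
          norm_num
  -- the φ part
  haveI hPB0 : IsProbabilityMeasure (μ.map (B 0)) :=
    Measure.isProbabilityMeasure_map (hB 0).aemeasurable
  haveI hPU1 : IsProbabilityMeasure (μ.map (U 1)) :=
    Measure.isProbabilityMeasure_map (hU 1).aemeasurable
  have hB0U1 : IndepFun (B 0) (U 1) μ := by
    have h := hindep.indepFun (show (Sum.inr 0 : ℕ ⊕ ℕ) ≠ Sum.inl 1 by simp)
    simpa using h
  have hlawBU : μ.map (fun ω => (B 0 ω, U 1 ω)) = (μ.map (B 0)).prod (μ.map (U 1)) :=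
    (indepFun_iff_map_prod_eq_prod_map_map (hB 0).aemeasurable (hU 1).aemeasurable).mp hB0U1
  have hφint : Integrable (sbPhi ν n₁ n₂) ((μ.map (B 0)).prod (μ.map (U 1))) := by
    refine (integrable_const (1:ℝ)).mono'
      (sbPhi_meas ν n₁ n₂).aestronglyMeasurable (ae_of_all _ ?_)
    intro p
    rw [Real.norm_eq_abs]
    exact sbPhi_abs_le hν0 hν1 n₁ n₂ p
  have hmapφ := integral_map (μ := μ) (φ := fun ω => (B 0 ω, U 1 ω))
    ((hB 0).prodMk (hU 1)).aemeasurable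
    (f := sbPhi ν n₁ n₂)
    (by rw [hlawBU]; exact hφint.aestronglyMeasurable)
  have hEφ : ∫ ω, sbPhi ν n₁ n₂ (B 0 ω, U 1 ω) ∂μ
      = ∫ b, ∫ u, sbPhi ν n₁ n₂ (b, u) ∂(μ.map (U 1)) ∂(μ.map (B 0)) := by
    rw [← hmapφ, hlawBU, MeasureTheory.integral_prod _ hφint]
  have hinner : ∀ b : ℝ, (∫ u, sbPhi ν n₁ n₂ (b, u) ∂(μ.map (U 1)))
      = ν * ((if b ∈ Set.Icc (0:ℝ) 1 then (1:ℝ) else 0) * (b ^ n₁ * (1-b) ^ (n₂+1))) := by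
    intro b
    by_cases hb : b ∈ Set.Icc (0:ℝ) 1
    · have hthr := sbThr_mem hν0 hν1 hb
      have e : ∀ u : ℝ, sbPhi ν n₁ n₂ (b, u)
          = (if u ≤ sbThr ν b then (1:ℝ) else 0) * (b ^ n₁ * (1-b) ^ n₂ * (1 - ν * b)) := by
        intro u
        simp only [sbPhi, if_pos hb, one_mul]
      rw [integral_congr_ae (ae_of_all _ e), integral_mul_const]
      have hu : ∫ u, (if u ≤ sbThr ν b then (1:ℝ) else 0) ∂(μ.map (U 1)) = sbThr ν b := by
        have h : (fun u : ℝ => if u ≤ sbThr ν b then (1:ℝ) else 0)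
            = Set.indicator (Set.Iic (sbThr ν b)) (1 : ℝ → ℝ) := by
          funext u
          simp [Set.indicator_apply]
        rw [h, integral_indicator_one measurableSet_Iic, measureReal_def,
          Measure.map_apply (hU 1) measurableSet_Iic]
        have hpre : U 1 ⁻¹' Set.Iic (sbThr ν b) = {ω | U 1 ω ≤ sbThr ν b} := rfl
        rw [hpre, hUd 1 _ hthr, ENNReal.toReal_ofReal hthr.1]
      rw [hu, if_pos hb]
      have hmul := sbThr_mul hν0 hν1 hb
      calc sbThr ν b * (b ^ n₁ * (1-b) ^ n₂ * (1 - ν * b))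
          = (sbThr ν b * (1 - ν * b)) * (b ^ n₁ * (1-b) ^ n₂) := by ring
        _ = (ν * (1-b)) * (b ^ n₁ * (1-b) ^ n₂) := by rw [hmul]
        _ = ν * (1 * (b ^ n₁ * (1-b) ^ (n₂+1))) := by ring
    · have e : ∀ u : ℝ, sbPhi ν n₁ n₂ (b, u) = 0 := by
        intro u
        simp [sbPhi, hb]
      rw [integral_congr_ae (ae_of_all _ e), integral_zero, if_neg hb]
      ring
  have haeB0 : ∀ᵐ b ∂(μ.map (B 0)), b ∈ Set.Icc (0:ℝ) 1 := by
    refine (ae_map_iff (p := fun b => b ∈ Set.Icc (0:ℝ) 1)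
      (hB 0).aemeasurable ?_).mpr (ae_of_all _ (hBr 0))
    exact measurableSet_Icc
  have hout : ∫ b, ∫ u, sbPhi ν n₁ n₂ (b, u) ∂(μ.map (U 1)) ∂(μ.map (B 0))
      = ν * ∫ b, b ^ n₁ * (1-b) ^ (n₂+1) ∂(μ.map (B 0)) := by
    calc ∫ b, ∫ u, sbPhi ν n₁ n₂ (b, u) ∂(μ.map (U 1)) ∂(μ.map (B 0))
        = ∫ b, ν * ((if b ∈ Set.Icc (0:ℝ) 1 then (1:ℝ) else 0) *
            (b ^ n₁ * (1-b) ^ (n₂+1))) ∂(μ.map (B 0)) :=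
          integral_congr_ae (ae_of_all _ hinner)
      _ = ∫ b, ν * (b ^ n₁ * (1-b) ^ (n₂+1)) ∂(μ.map (B 0)) :=
          integral_congr_ae (haeB0.mono fun b hb => by simp [hb])
      _ = ν * ∫ b, b ^ n₁ * (1-b) ^ (n₂+1) ∂(μ.map (B 0)) := by
          rw [integral_const_mul]
  have hmomB0 : ∫ b, b ^ n₁ * (1-b) ^ (n₂+1) ∂(μ.map (B 0))
      = θ * n₁.factorial * Real.Gamma (θ + (n₂+1 : ℕ)) /
          Real.Gamma (θ + n₁ + (n₂+1 : ℕ) + 1) :=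
    mom μ hθ (hB 0) (hBr 0) (hBd 0) n₁ (n₂+1)
  rw [hEψ, hEind, hEB1, hEφ, hout, hmomB0]
  rw [show ((n₂+1 : ℕ) : ℝ) = (n₂ : ℝ) + 1 by push_cast; ring]
  rw [show θ + ((n₂:ℝ)+1) = θ + n₂ + 1 by ring, show θ + (n₁:ℝ) + ((n₂:ℝ)+1) + 1 = θ + n₁ + n₂ + 2 by ring]
  rw [Real.Gamma_add_one hθ.ne']
  have hA : Real.Gamma (θ + n₂ + 1) ≠ 0 := (Real.Gamma_pos_of_pos (by positivity)).ne'
  have hC : Real.Gamma (θ + n₁ + n₂ + 2) ≠ 0 := (Real.Gamma_pos_of_pos (by positivity)).ne'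
  field_simp
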